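/- Let A be a Frobenius algebra with Nakayama automorphism β of order dividing 3, and let {w_j}, {w_j*} be dual bases with respect to the form (x,y)=f(xy), (x,y)=(y,β(x)). Define μ'₁₂: A → A by μ'₁₂(x) = Σ_j w_j* β(x) β(w_j). Then (μ'₁₂(x), y) = (x, μ'₁₂(β(y))) for all x, y ∈ A; i.e. the adjoint of μ'₁₂ with respect to the form equals μ'₁₂ ∘ β. -/

import Mathlib

/-- Let `A` be a finite-dimensional Frobenius algebra over ℂ with
form `(x,y) = f(xy)`, Nakayama automorphism `β` with `(x,y) = (y, β x)` and
`β³ = id`, and dual bases `{w j}`, `{wd j}`. Define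
`μ'₁₂(x) = Σ_j wd j · β x · β (w j)`. Then `(μ'₁₂ x, y) = (x, μ'₁₂ (β y))`
for all `x y : A`, i.e. the adjoint of `μ'₁₂` is `μ'₁₂ ∘ β`. -/
theorem stmt5 {A : Type*} [Ring A] [Algebra ℂ A] [FiniteDimensional ℂ A]
    (f : A →ₗ[ℂ] ℂ) (hnd : ∀ x : A, (∀ y : A, f (x * y) = 0) → x = 0)
    (β : A ≃ₐ[ℂ] A) (hβ : ∀ x y : A, f (x * y) = f (y * β x))
    (hβ3 : ∀ x : A, β (β (β x)) = x)
    {ι : Type*} [Fintype ι] [DecidableEq ι] (b : Module.Basis ι ℂ A) (w wd : ι → A)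
    (hw : ∀ j, w j = b j)
    (hdual : ∀ j k, f (w j * wd k) = if j = k then 1 else 0) :
    ∀ x y : A,
      f ((∑ j, wd j * β x * β (w j)) * y)
        = f (x * ∑ j, wd j * β (β y) * β (w j)) := by
  intro x y
  set z : A := β (β y) with hz
  have hβz : β z = y := hβ3 y
  -- dual pairing the other way around
  have hdualβ : ∀ j k, f (wd k * β (w j)) = if j = k then 1 else 0 := fun j k => by
    rw [← hβ (w j) (wd k), hdual]
  -- expansion in the basis {w k} with coefficients f (a * wd k)
  have expand1 : ∀ a : A, a = ∑ k, f (a * wd k) • w k := by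
    intro a
    have hrep : ∀ k, f (a * wd k) = b.repr a k := by
      intro k
      conv_lhs => rw [← b.sum_repr a]
      rw [Finset.sum_mul, map_sum]
      have : ∀ j ∈ Finset.univ, f (b.repr a j • b j * wd k)
          = b.repr a j * (if j = k then 1 else 0) := by
        intro j _
        rw [smul_mul_assoc, map_smul, smul_eq_mul, ← hw, hdual]
      rw [Finset.sum_congr rfl this]
      simp [Finset.sum_ite_eq]
    rw [show (∑ k, f (a * wd k) • w k) = ∑ k, b.repr a k • b k from
      Finset.sum_congr rfl fun k _ => by rw [hrep k, hw]]
    exact (b.sum_repr a).symm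
  -- expansion in the basis {β (w j)} with coefficients f (wd j * a)
  have expand2 : ∀ a : A, a = ∑ j, f (wd j * a) • β (w j) := by
    intro a
    have bβ : Module.Basis ι ℂ A := b.map β.toLinearEquiv
    have hbβ : ∀ j, (b.map β.toLinearEquiv : Module.Basis ι ℂ A) j = β (w j) := by
      intro j; simp [Module.Basis.map_apply, hw]
    set c : Module.Basis ι ℂ A := b.map β.toLinearEquiv with hc
    have hrep : ∀ j, f (wd j * a) = c.repr a j := by
      intro j
      conv_lhs => rw [← c.sum_repr a]
      rw [Finset.mul_sum, map_sum]
      have : ∀ m ∈ Finset.univ, f (wd j * (c.repr a m • c m))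
          = c.repr a m * (if m = j then 1 else 0) := by
        intro m _
        rw [mul_smul_comm, map_smul, smul_eq_mul, hbβ, hdualβ]
      rw [Finset.sum_congr rfl this]
      simp [Finset.sum_ite_eq']
    rw [show (∑ j, f (wd j * a) • β (w j)) = ∑ j, c.repr a j • c j from
      Finset.sum_congr rfl fun j _ => by rw [hrep j, hbβ j]]
    exact (c.sum_repr a).symm
  -- Casimir swap applied to the bilinear map (u, v) ↦ f (x * (u * z * v))
  have hA : ∀ j, f (x * (wd j * z * β (w j)))
      = ∑ k, f (wd j * wd k) * f (x * (w k * z * β (w j))) := by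
    intro j
    conv_lhs => rw [expand1 (wd j)]
    rw [Finset.sum_mul, Finset.sum_mul, Finset.mul_sum, map_sum]
    refine Finset.sum_congr rfl fun k _ => ?_
    rw [smul_mul_assoc, smul_mul_assoc, mul_smul_comm, map_smul, smul_eq_mul]
  have hB : ∀ k, f (x * (w k * z * wd k))
      = ∑ j, f (wd j * wd k) * f (x * (w k * z * β (w j))) := by
    intro k
    conv_lhs => rw [expand2 (wd k)]
    rw [Finset.mul_sum, Finset.mul_sum, map_sum]
    refine Finset.sum_congr rfl fun j _ => ?_
    rw [mul_smul_comm, mul_smul_comm, map_smul, smul_eq_mul]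
  have swap : ∑ j, f (x * (wd j * z * β (w j))) = ∑ k, f (x * (w k * z * wd k)) := by
    rw [Finset.sum_congr rfl fun j _ => hA j, Finset.sum_congr rfl fun k _ => hB k,
      Finset.sum_comm]
  -- cyclic move: f (x * (w k * z * wd k)) = f ((wd k * β x * β (w k)) * y)
  have cyc : ∀ k, f (x * (w k * z * wd k)) = f (wd k * β x * β (w k) * y) := by
    intro k
    have h1 : x * (w k * z * wd k) = (x * w k * z) * wd k := by
      rw [← mul_assoc, ← mul_assoc]
    rw [h1, hβ (x * w k * z) (wd k), map_mul β, map_mul β, hβz,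
      ← mul_assoc, ← mul_assoc]
  calc f ((∑ j, wd j * β x * β (w j)) * y)
      = ∑ j, f (wd j * β x * β (w j) * y) := by rw [Finset.sum_mul, map_sum]
    _ = ∑ j, f (x * (w j * z * wd j)) := by
        exact Finset.sum_congr rfl fun j _ => (cyc j).symm
    _ = ∑ j, f (x * (wd j * z * β (w j))) := swap.symm
    _ = f (x * ∑ j, wd j * β (β y) * β (w j)) := by
        rw [Finset.mul_sum, map_sum]
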